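/- Let C be a reduced combinatorial code on n neurons and let i ∈ [n]. Define, for c ∈ C, g(c) = (c ∖ {i}) ∪ ⋃ { √[C]({i,j}) : j ∈ [n], {i,j} ⊆ c, tk_C({i,j}) ≠ tk_C({i}) } (this is f_i^⊤(f_i(c)), the i-th covering map followed by its canonical adjoint). Then g(c) = c for every c ∈ C if and only if the neuron i is free, i.e. √[C]{i} ∉ C. In other words, the i-th covering map f_i is a Boolean matrix factorization if and only if i is free. -/
import Mathlib


/-- The trunk of `τ` in the code `C`: all codewords containing `τ`. -/
def trunk {n : ℕ} (C : Finset (Finset (Fin n))) (τ : Finset (Fin n)) :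
    Finset (Finset (Fin n)) :=
  C.filter (fun σ => τ ⊆ σ)

/-- The root of a family of subsets: the intersection of all its members. -/
def root {n : ℕ} (S : Finset (Finset (Fin n))) : Finset (Fin n) :=
  S.inf id

/-- The root of `τ` relative to `C`. -/
def rootRel {n : ℕ} (C : Finset (Finset (Fin n))) (τ : Finset (Fin n)) :
    Finset (Fin n) :=
  root (trunk C τ)

/-- A code is reduced if it has no trivial neurons (empty trunks) and no
redundant neurons. -/
def Reduced {n : ℕ} (C : Finset (Finset (Fin n))) : Prop :=
  (∀ i : Fin n, (trunk C {i}).Nonempty) ∧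
    ∀ i : Fin n, ¬ ∃ σ : Finset (Fin n), i ∉ σ ∧ trunk C {i} = trunk C σ

/-- The composite `f_i^⊤ ∘ f_i` of the `i`-th covering map with its canonical
adjoint: `g(c) = (c ∖ {i}) ∪ ⋃ {√[C]({i,j}) : {i,j} ⊆ c, tk_C({i,j}) ≠ tk_C({i})}`. -/
def coverRoundTrip {n : ℕ} (C : Finset (Finset (Fin n))) (i : Fin n)
    (c : Finset (Fin n)) : Finset (Fin n) :=
  c.erase i ∪
    (Finset.univ.filter (fun j : Fin n =>
        ({i, j} : Finset (Fin n)) ⊆ c ∧ trunk C {i, j} ≠ trunk C {i})).sup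
      (fun j => rootRel C {i, j})

lemma trunk_mem {n : ℕ} {C : Finset (Finset (Fin n))} {τ σ : Finset (Fin n)} :
    σ ∈ trunk C τ ↔ σ ∈ C ∧ τ ⊆ σ := by simp [trunk]

lemma rootRel_subset {n : ℕ} {C : Finset (Finset (Fin n))} {τ σ : Finset (Fin n)}
    (h : σ ∈ C) (h2 : τ ⊆ σ) : rootRel C τ ⊆ σ := by
  have := Finset.inf_le (f := id) (trunk_mem.mpr ⟨h, h2⟩ : σ ∈ trunk C τ)
  simpa [rootRel, root] using this

lemma mem_rootRel {n : ℕ} {C : Finset (Finset (Fin n))} {τ : Finset (Fin n)} {a : Fin n}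
    (h : ∀ σ ∈ trunk C τ, a ∈ σ) : a ∈ rootRel C τ := by
  simpa [rootRel, root, Finset.mem_inf] using h

theorem coveringMap_BMF_iff_free (n : ℕ) (C : Finset (Finset (Fin n)))
    (i : Fin n) (hC : Reduced C) :
    (∀ c ∈ C, coverRoundTrip C i c = c) ↔ rootRel C {i} ∉ C := by
  constructor
  · intro hg hr
    have hi : i ∈ rootRel C {i} :=
      mem_rootRel (fun σ hσ => (trunk_mem.mp hσ).2 (Finset.mem_singleton_self i))
    have heq := hg _ hr
    rw [← heq] at hi
    rcases Finset.mem_union.mp hi with h | h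
    · exact absurd rfl (Finset.ne_of_mem_erase h)
    · rcases Finset.mem_sup.mp h with ⟨j, hj, _⟩
      rcases Finset.mem_filter.mp hj with ⟨-, hsub, hne⟩
      apply hne
      apply Finset.Subset.antisymm
      · intro σ hσ
        rcases trunk_mem.mp hσ with ⟨h1, h2⟩
        exact trunk_mem.mpr ⟨h1, Finset.singleton_subset_iff.mpr
          (h2 (Finset.mem_insert_self i _))⟩
      · intro σ hσ
        rcases trunk_mem.mp hσ with ⟨hσC, hiσ⟩
        refine trunk_mem.mpr ⟨hσC, Finset.insert_subset_iff.mpr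
          ⟨hiσ (Finset.mem_singleton_self i), Finset.singleton_subset_iff.mpr ?_⟩⟩
        have hrσ : rootRel C {i} ⊆ σ := rootRel_subset hσC hiσ
        exact hrσ (hsub (Finset.mem_insert_of_mem (Finset.mem_singleton_self j)))
  · intro hr c hc
    apply Finset.Subset.antisymm
    · intro x hx
      rcases Finset.mem_union.mp hx with h | h
      · exact Finset.mem_of_mem_erase h
      · rcases Finset.mem_sup.mp h with ⟨j, hj, hx'⟩
        rcases Finset.mem_filter.mp hj with ⟨-, hsub, -⟩
        exact rootRel_subset hc hsub hx'
    · intro x hx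
      by_cases hxi : x = i
      · have hx : i ∈ c := hxi ▸ hx
        suffices h : i ∈ coverRoundTrip C i c by exact hxi ▸ h
        by_contra hni
        have hexists : ∃ j : Fin n, ({i, j} : Finset (Fin n)) ⊆ c ∧
            trunk C {i, j} ≠ trunk C {i} := by
          by_contra hno
          push_neg at hno
          apply hr
          have hcr : c = rootRel C {i} := by
            apply Finset.Subset.antisymm
            · intro y hy
              apply mem_rootRel
              intro σ hσ
              have hsubc : ({i, y} : Finset (Fin n)) ⊆ c :=
                Finset.insert_subset_iff.mpr ⟨hx, Finset.singleton_subset_iff.mpr hy⟩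
              have heq := hno y hsubc
              have hσ' : σ ∈ trunk C {i, y} := heq ▸ hσ
              exact (trunk_mem.mp hσ').2 (Finset.mem_insert_of_mem (Finset.mem_singleton_self y))
            · exact rootRel_subset hc (Finset.singleton_subset_iff.mpr hx)
          rw [← hcr]; exact hc
        rcases hexists with ⟨j, hsub, hne⟩
        apply hni
        apply Finset.mem_union_right
        apply Finset.mem_sup.mpr
        refine ⟨j, Finset.mem_filter.mpr ⟨Finset.mem_univ j, hsub, hne⟩, ?_⟩
        exact mem_rootRel (fun σ hσ =>
          (trunk_mem.mp hσ).2 (Finset.mem_insert_self i _))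
      · exact Finset.mem_union_left _ (Finset.mem_erase.mpr ⟨hxi, hx⟩)
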